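/- arXiv:2211.14212 — 2 statements merged into one kernel-verified Lean document; each statement's English description precedes it below -/
import Mathlib

section
/- Under the Golub–Kahan relations A V_k = U_{k+1} H_k, U_{k+1}ᵀU_{k+1} = I, and Aᵀ U_{k+1} = V_{k+1} G_k with V_{k+1}ᵀV_{k+1} = I whose first k columns are V_k, for every y ∈ ℝ^k one has ‖Aᵀ(b − A V_k y)‖₂ = ‖ ‖Aᵀb‖ e₁ − G_k H_k y ‖₂, provided V_{k+1} e₁ = Aᵀb/‖Aᵀb‖. -/
open Matrix

noncomputable def euclNorm {ι : Type*} [Fintype ι] (v : ι → ℝ) : ℝ :=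
  Real.sqrt (∑ i, v i ^ 2)

lemma euclNorm_ne_zero {ι : Type*} [Fintype ι] {v : ι → ℝ} (hv : v ≠ 0) : euclNorm v ≠ 0 := by
  unfold euclNorm
  rw [Real.sqrt_ne_zero']
  rcases Function.ne_iff.mp hv with ⟨i, hi⟩
  simp only [Pi.zero_apply] at hi
  exact Finset.sum_pos' (fun j _ => sq_nonneg _)
    ⟨i, Finset.mem_univ i, by positivity⟩

lemma euclNorm_orth {m n : Type*} [Fintype m] [Fintype n] [DecidableEq n] (Q : Matrix m n ℝ)
    (hQ : Qᵀ * Q = 1) (x : n → ℝ) : euclNorm (Q.mulVec x) = euclNorm x := by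
  unfold euclNorm
  congr 1
  have h1 : ∑ i, Q.mulVec x i ^ 2 = Q.mulVec x ⬝ᵥ Q.mulVec x := by
    simp [dotProduct, sq]
  have h2 : ∑ i, x i ^ 2 = x ⬝ᵥ x := by simp [dotProduct, sq]
  rw [h1, h2, dotProduct_mulVec, ← mulVec_transpose, mulVec_mulVec, hQ, one_mulVec]

theorem stmt_8 {N M k : ℕ} (A : Matrix (Fin N) (Fin M) ℝ) (b : Fin N → ℝ)
    (hb : Aᵀ.mulVec b ≠ 0)
    (V : Matrix (Fin M) (Fin k) ℝ) (V' : Matrix (Fin M) (Fin (k + 1)) ℝ)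
    (U : Matrix (Fin N) (Fin (k + 1)) ℝ)
    (H : Matrix (Fin (k + 1)) (Fin k) ℝ) (G : Matrix (Fin (k + 1)) (Fin (k + 1)) ℝ)
    (hAV : A * V = U * H) (hU : Uᵀ * U = 1)
    (hAU : Aᵀ * U = V' * G) (hV' : V'ᵀ * V' = 1)
    (hcol : V'.submatrix id Fin.castSucc = V)
    (hU1 : U.mulVec (Pi.single 0 1 : Fin (k + 1) → ℝ) = (euclNorm b)⁻¹ • b)
    (hV1 : V'.mulVec (Pi.single 0 1 : Fin (k + 1) → ℝ) = (euclNorm (Aᵀ.mulVec b))⁻¹ • Aᵀ.mulVec b) :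
    ∀ y : Fin k → ℝ,
      euclNorm (Aᵀ.mulVec (b - A.mulVec (V.mulVec y))) =
        euclNorm (euclNorm (Aᵀ.mulVec b) • (Pi.single 0 1 : Fin (k + 1) → ℝ) -
          (G * H).mulVec y) := by
  intro y
  have hβ : euclNorm (Aᵀ.mulVec b) ≠ 0 := euclNorm_ne_zero hb
  have hAtb : Aᵀ.mulVec b = V'.mulVec (euclNorm (Aᵀ.mulVec b) • (Pi.single 0 1 : Fin (k + 1) → ℝ)) := by
    rw [mulVec_smul, hV1, smul_smul, mul_inv_cancel₀ hβ, one_smul]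
  have h2 : Aᵀ.mulVec (A.mulVec (V.mulVec y)) = V'.mulVec ((G * H).mulVec y) := by
    rw [mulVec_mulVec, mulVec_mulVec, Matrix.mul_assoc Aᵀ A V, hAV, ← Matrix.mul_assoc, hAU,
      Matrix.mul_assoc, ← mulVec_mulVec]
  have key : Aᵀ.mulVec (b - A.mulVec (V.mulVec y)) =
      V'.mulVec (euclNorm (Aᵀ.mulVec b) • (Pi.single 0 1 : Fin (k + 1) → ℝ) - (G * H).mulVec y) := by
    rw [mulVec_sub, mulVec_sub, ← hAtb, ← h2]
  rw [key, euclNorm_orth V' hV']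
end

section
/- For λ > 0, the map λ ↦ ‖A x_λ − b‖₂, where x_λ = (AᵀA + λ²I)⁻¹Aᵀb is the Tikhonov solution, is monotonically non-decreasing in λ, while λ ↦ ‖x_λ‖₂ is monotonically non-increasing. -/
open Matrix

noncomputable def enorm {ι : Type*} [Fintype ι] (v : ι → ℝ) : ℝ :=
  Real.sqrt (∑ i, v i ^ 2)

noncomputable def tikhSol {N M : ℕ} (A : Matrix (Fin N) (Fin M) ℝ) (b : Fin N → ℝ)
    (lam : ℝ) : Fin M → ℝ :=
  (Aᵀ * A + lam ^ 2 • (1 : Matrix (Fin M) (Fin M) ℝ))⁻¹.mulVec (Aᵀ.mulVec b)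

section Aux

variable {N M : ℕ} (A : Matrix (Fin N) (Fin M) ℝ) (b : Fin N → ℝ)

lemma aux_posDef {lam : ℝ} (hlam : lam ≠ 0) :
    (Aᵀ * A + lam ^ 2 • (1 : Matrix (Fin M) (Fin M) ℝ)).PosDef := by
  have h1 : (Aᵀ * A).PosSemidef := by
    have := Matrix.posSemidef_conjTranspose_mul_self A
    simpa [Matrix.conjTranspose_eq_transpose_of_trivial] using this
  have h2 : (lam ^ 2 • (1 : Matrix (Fin M) (Fin M) ℝ)).PosDef := by
    rw [Matrix.smul_one_eq_diagonal]
    exact Matrix.posDef_diagonal_iff.mpr fun i => by positivity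
  exact Matrix.PosDef.posSemidef_add h1 h2

lemma aux_normal {lam : ℝ} (hlam : lam ≠ 0) :
    (Aᵀ * A + lam ^ 2 • (1 : Matrix (Fin M) (Fin M) ℝ)) *ᵥ tikhSol A b lam
      = Aᵀ *ᵥ b := by
  set Mm := Aᵀ * A + lam ^ 2 • (1 : Matrix (Fin M) (Fin M) ℝ) with hM
  have hunit : IsUnit Mm.det := (Matrix.isUnit_iff_isUnit_det _).1 (aux_posDef A hlam).isUnit
  rw [tikhSol, Matrix.mulVec_mulVec, ← hM, Matrix.mul_nonsing_inv _ hunit, Matrix.one_mulVec]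

/-- the Tikhonov functional -/
noncomputable def tikJ {N M : ℕ} (A : Matrix (Fin N) (Fin M) ℝ) (b : Fin N → ℝ)
    (lam : ℝ) (x : Fin M → ℝ) : ℝ :=
  (A *ᵥ x - b) ⬝ᵥ (A *ᵥ x - b) + lam ^ 2 * (x ⬝ᵥ x)

lemma aux_min {lam : ℝ} (hlam : lam ≠ 0) (x : Fin M → ℝ) :
    tikJ A b lam (tikhSol A b lam) ≤ tikJ A b lam x := by
  set x₀ := tikhSol A b lam with hx₀
  set u := x - x₀ with hu
  have hx : x = x₀ + u := by simp [hu]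
  -- cross term vanishes
  have hAt : Aᵀ *ᵥ (A *ᵥ x₀ - b) = -(lam ^ 2 • x₀) := by
    have h := aux_normal A b hlam
    rw [← hx₀] at h
    have : Aᵀ *ᵥ (A *ᵥ x₀ - b) = (Aᵀ * A) *ᵥ x₀ - Aᵀ *ᵥ b := by
      rw [Matrix.mulVec_sub, Matrix.mulVec_mulVec]
    rw [this, ← h]
    rw [Matrix.add_mulVec]
    simp [Matrix.smul_mulVec]
  have hcross : (A *ᵥ u) ⬝ᵥ (A *ᵥ x₀ - b) + lam ^ 2 * (u ⬝ᵥ x₀) = 0 := by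
    have h1 : (A *ᵥ u) ⬝ᵥ (A *ᵥ x₀ - b) = u ⬝ᵥ (Aᵀ *ᵥ (A *ᵥ x₀ - b)) := by
      rw [Matrix.dotProduct_mulVec, Matrix.vecMul_transpose]
    rw [h1, hAt]
    simp only [dotProduct_neg, dotProduct_smul, smul_eq_mul]
    ring
  have hexp : tikJ A b lam x = tikJ A b lam x₀ + ((A *ᵥ u) ⬝ᵥ (A *ᵥ u) + lam ^ 2 * (u ⬝ᵥ u))
      + 2 * ((A *ᵥ u) ⬝ᵥ (A *ᵥ x₀ - b) + lam ^ 2 * (u ⬝ᵥ x₀)) := by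
    rw [hx]
    have h2 : A *ᵥ (x₀ + u) - b = (A *ᵥ x₀ - b) + A *ᵥ u := by
      rw [Matrix.mulVec_add]; abel
    rw [tikJ, tikJ, h2]
    simp only [dotProduct_add, add_dotProduct]
    have hc1 : (A *ᵥ x₀ - b) ⬝ᵥ (A *ᵥ u) = (A *ᵥ u) ⬝ᵥ (A *ᵥ x₀ - b) := dotProduct_comm _ _
    have hc2 : x₀ ⬝ᵥ u = u ⬝ᵥ x₀ := dotProduct_comm _ _
    rw [hc1, hc2]
    ring
  rw [hexp, hcross]
  have hnn : (0:ℝ) ≤ (A *ᵥ u) ⬝ᵥ (A *ᵥ u) + lam ^ 2 * (u ⬝ᵥ u) := by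
    have h1 : (0:ℝ) ≤ (A *ᵥ u) ⬝ᵥ (A *ᵥ u) :=
      Finset.sum_nonneg fun i _ => mul_self_nonneg _
    have h2 : (0:ℝ) ≤ u ⬝ᵥ u := Finset.sum_nonneg fun i _ => mul_self_nonneg _
    positivity
  linarith

lemma enorm_sq (v : Fin M → ℝ) : _root_.enorm v ^ 2 = v ⬝ᵥ v := by
  rw [_root_.enorm, Real.sq_sqrt (Finset.sum_nonneg fun i _ => sq_nonneg _)]
  simp [dotProduct, sq]

lemma enorm_nonneg (v : Fin M → ℝ) : 0 ≤ _root_.enorm v := Real.sqrt_nonneg _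

end Aux

theorem stmt_18 {N M : ℕ} (A : Matrix (Fin N) (Fin M) ℝ) (b : Fin N → ℝ)
    (lam₁ lam₂ : ℝ) (h₁ : 0 < lam₁) (h₁₂ : lam₁ ≤ lam₂) :
    _root_.enorm (A.mulVec (tikhSol A b lam₁) - b) ≤ _root_.enorm (A.mulVec (tikhSol A b lam₂) - b) ∧
    _root_.enorm (tikhSol A b lam₂) ≤ _root_.enorm (tikhSol A b lam₁) := by
  have h₂ : 0 < lam₂ := lt_of_lt_of_le h₁ h₁₂
  set x₁ := tikhSol A b lam₁ with hx₁
  set x₂ := tikhSol A b lam₂ with hx₂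
  have hm1 : tikJ A b lam₁ x₁ ≤ tikJ A b lam₁ x₂ := aux_min A b h₁.ne' x₂
  have hm2 : tikJ A b lam₂ x₂ ≤ tikJ A b lam₂ x₁ := aux_min A b h₂.ne' x₁
  rw [tikJ, tikJ] at hm1 hm2
  set r₁ := (A *ᵥ x₁ - b) ⬝ᵥ (A *ᵥ x₁ - b) with hr₁
  set r₂ := (A *ᵥ x₂ - b) ⬝ᵥ (A *ᵥ x₂ - b) with hr₂
  set s₁ := x₁ ⬝ᵥ x₁ with hs₁
  set s₂ := x₂ ⬝ᵥ x₂ with hs₂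
  -- from the two inequalities: (lam₁²-lam₂²)(s₁-s₂) ≤ 0, and lam₁ ≤ lam₂ ⇒ s₂ ≤ s₁
  rcases eq_or_lt_of_le h₁₂ with heq | hlt
  · subst heq
    exact ⟨le_refl _, le_refl _⟩
  have hsq : lam₁ ^ 2 < lam₂ ^ 2 := by nlinarith
  have hs : s₂ ≤ s₁ := by nlinarith
  have hr : r₁ ≤ r₂ := by nlinarith
  constructor
  · have := Real.sqrt_le_sqrt (by
      have e1 := enorm_sq (A *ᵥ x₁ - b)
      have e2 := enorm_sq (A *ᵥ x₂ - b)
      show (∑ i, (A *ᵥ x₁ - b) i ^ 2) ≤ ∑ i, (A *ᵥ x₂ - b) i ^ 2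
      have f1 : (∑ i, (A *ᵥ x₁ - b) i ^ 2) = r₁ := by simp [hr₁, dotProduct, sq]
      have f2 : (∑ i, (A *ᵥ x₂ - b) i ^ 2) = r₂ := by simp [hr₂, dotProduct, sq]
      rw [f1, f2]; exact hr)
    exact this
  · exact Real.sqrt_le_sqrt (by
      show (∑ i, x₂ i ^ 2) ≤ ∑ i, x₁ i ^ 2
      have f1 : (∑ i, x₁ i ^ 2) = s₁ := by simp [hs₁, dotProduct, sq]
      have f2 : (∑ i, x₂ i ^ 2) = s₂ := by simp [hs₂, dotProduct, sq]
      rw [f1, f2]; exact hs)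
end
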